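/- Let d ≥ 2, m ≥ 1 and let ω = (ω_n)_{n≥0} be a sequence of surjective group homomorphisms ω_n : (ZMod d)^m → ZMod d. For every ξ ∈ X^ℕ, the orbit of ξ under the spinal group G_ω equals the cofinality class Cof(ξ). -/

import Mathlib

open MeasureTheory

noncomputable section

/-- The boundary of the `d`-regular rooted tree: infinite words over `X = {0,…,d-1}`,
identified with `ZMod d`. -/
abbrev Bd (d : ℕ) : Type := ℕ → ZMod d
/-- The rooted automorphism `a`: adds 1 (mod `d`) to the first letter. -/
def aMap (d : ℕ) (ξ : Bd d) : Bd d := fun n => if n = 0 then ξ 0 + 1 else ξ n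

open scoped Classical in
/-- The spinal automorphism `b_ω`: if `ξ` starts with `(d-1)^r 0`, add `ω r b` to the
letter at position `r + 1`; otherwise fix `ξ`. -/
def bMap (d m : ℕ) (ω : ℕ → ((Fin m → ZMod d) →+ ZMod d)) (b : Fin m → ZMod d)
    (ξ : Bd d) : Bd d := fun n =>
  if n ≠ 0 ∧ (∀ i, i < n - 1 → ξ i = (d : ZMod d) - 1) ∧ ξ (n - 1) = 0 then
    ξ n + ω (n - 1) b
  else ξ n
/-- The spinal generating set `S = {a^j : 1 ≤ j ≤ d-1} ∪ {b_ω : b ∈ B ∖ {0}}`,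
as a set of self-maps of the boundary. -/
def genSet (d m : ℕ) (ω : ℕ → ((Fin m → ZMod d) →+ ZMod d)) : Set (Bd d → Bd d) :=
  {f | ∃ j, 1 ≤ j ∧ j ≤ d - 1 ∧ f = (aMap d)^[j]} ∪ {f | ∃ b, b ≠ 0 ∧ f = bMap d m ω b}
/-- Two boundary points are cofinal if they agree at all sufficiently large positions. -/
def Cofinal {d : ℕ} (ξ η : Bd d) : Prop := ∃ N, ∀ n, N ≤ n → ξ n = η n

/-- The cofinality class of `ξ`. -/
def Cof {d : ℕ} (ξ : Bd d) : Set (Bd d) := {η | Cofinal ξ η}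

theorem self_mem_Cof {d : ℕ} (ξ : Bd d) : ξ ∈ Cof ξ := ⟨0, fun _ _ => rfl⟩

/-- The spinal generators, as permutations of the boundary. -/
def genPerm (d m : ℕ) (ω : ℕ → ((Fin m → ZMod d) →+ ZMod d)) : Set (Equiv.Perm (Bd d)) :=
  {π | ⇑π ∈ genSet d m ω}

/-- The spinal group `G_ω`, the group of permutations of the boundary generated by the
spinal generating set `S`. -/
def spinalGroup (d m : ℕ) (ω : ℕ → ((Fin m → ZMod d) →+ ZMod d)) :
    Subgroup (Equiv.Perm (Bd d)) :=
  Subgroup.closure (genPerm d m ω)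

/-- The spine condition. -/
def Pc (d : ℕ) (ξ : Bd d) (n : ℕ) : Prop :=
  n ≠ 0 ∧ (∀ i, i < n - 1 → ξ i = (d : ZMod d) - 1) ∧ ξ (n - 1) = 0

lemma neg_one_ne {d : ℕ} (hd : 2 ≤ d) : ((d : ZMod d) - 1 : ZMod d) ≠ 0 := by
  haveI : Fact (1 < d) := ⟨hd⟩
  simp [ZMod.natCast_self]

lemma bMap_pos {d m : ℕ} {ω : ℕ → ((Fin m → ZMod d) →+ ZMod d)} {b : Fin m → ZMod d}
    {ξ : Bd d} {n : ℕ} (h : Pc d ξ n) :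
    bMap d m ω b ξ n = ξ n + ω (n - 1) b := by
  simp only [bMap]; exact if_pos h

lemma bMap_neg {d m : ℕ} {ω : ℕ → ((Fin m → ZMod d) →+ ZMod d)} {b : Fin m → ZMod d}
    {ξ : Bd d} {n : ℕ} (h : ¬ Pc d ξ n) :
    bMap d m ω b ξ n = ξ n := by
  simp only [bMap]; exact if_neg h

lemma Pc_uniq {d : ℕ} (hd : 2 ≤ d) {ξ : Bd d} {k n : ℕ} (hk : Pc d ξ k) (hn : Pc d ξ n) :
    k = n := by
  by_contra hne
  have hk0 : k ≠ 0 := hk.1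
  have hn0 : n ≠ 0 := hn.1
  rcases Nat.lt_or_ge k n with h | h
  · have h1 : k - 1 < n - 1 := by omega
    have h2 := hn.2.1 (k - 1) h1
    rw [hk.2.2] at h2
    exact neg_one_ne hd h2.symm
  · have h1 : n - 1 < k - 1 := by omega
    have h2 := hk.2.1 (n - 1) h1
    rw [hn.2.2] at h2
    exact neg_one_ne hd h2.symm

lemma Pc_bMap_iff {d m : ℕ} (hd : 2 ≤ d) {ω : ℕ → ((Fin m → ZMod d) →+ ZMod d)}
    {b : Fin m → ZMod d} {ξ : Bd d} {n : ℕ} :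
    Pc d (bMap d m ω b ξ) n ↔ Pc d ξ n := by
  constructor
  · intro h
    have hnone : ∀ i, i < n → ¬ Pc d ξ i := by
      intro i hi hPi
      have hi0 : i ≠ 0 := hPi.1
      have hnot : ¬ Pc d ξ (i - 1) := by
        intro hc
        have hc0 : i - 1 ≠ 0 := hc.1
        have := Pc_uniq hd hc hPi
        omega
      have hv : bMap d m ω b ξ (i - 1) = ξ (i - 1) := bMap_neg hnot
      have hlt : i - 1 < n - 1 := by omega
      have := h.2.1 (i - 1) hlt
      rw [hv, hPi.2.2] at this
      exact neg_one_ne hd this.symm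
    have hag : ∀ i, i < n → bMap d m ω b ξ i = ξ i := fun i hi => bMap_neg (hnone i hi)
    have hn0 : n ≠ 0 := h.1
    refine ⟨h.1, fun i hi => ?_, ?_⟩
    · rw [← hag i (by omega)]; exact h.2.1 i hi
    · rw [← hag (n - 1) (by omega)]; exact h.2.2
  · intro h
    have hag : ∀ i, i < n → bMap d m ω b ξ i = ξ i := by
      intro i hi
      refine bMap_neg (fun hc => ?_)
      have := Pc_uniq hd hc h
      omega
    have hn0 : n ≠ 0 := h.1
    refine ⟨h.1, fun i hi => ?_, ?_⟩
    · rw [hag i (by omega)]; exact h.2.1 i hi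
    · rw [hag (n - 1) (by omega)]; exact h.2.2

lemma bMap_bMap {d m : ℕ} (hd : 2 ≤ d) (ω : ℕ → ((Fin m → ZMod d) →+ ZMod d))
    (b : Fin m → ZMod d) (ξ : Bd d) :
    bMap d m ω (-b) (bMap d m ω b ξ) = ξ := by
  funext n
  by_cases h : Pc d ξ n
  · rw [bMap_pos (Pc_bMap_iff hd |>.mpr h), bMap_pos h, map_neg]
    ring
  · rw [bMap_neg (fun hc => h (Pc_bMap_iff hd |>.mp hc)), bMap_neg h]

/-- `bMap` as a permutation. -/
def bPerm {d m : ℕ} (hd : 2 ≤ d) (ω : ℕ → ((Fin m → ZMod d) →+ ZMod d))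
    (b : Fin m → ZMod d) : Equiv.Perm (Bd d) where
  toFun := bMap d m ω b
  invFun := bMap d m ω (-b)
  left_inv := fun ξ => bMap_bMap hd ω b ξ
  right_inv := fun ξ => by
    have := bMap_bMap hd ω (-b) ξ
    rwa [neg_neg] at this

/-- `aMap` as a permutation. -/
def aPerm (d : ℕ) : Equiv.Perm (Bd d) where
  toFun := aMap d
  invFun := fun ξ n => if n = 0 then ξ 0 - 1 else ξ n
  left_inv := fun ξ => by funext n; by_cases h : n = 0 <;> simp [aMap, h]
  right_inv := fun ξ => by funext n; by_cases h : n = 0 <;> simp [aMap, h]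

lemma aMap_iter_ne {d : ℕ} (j : ℕ) (ξ : Bd d) {n : ℕ} (hn : n ≠ 0) :
    (aMap d)^[j] ξ n = ξ n := by
  induction j with
  | zero => rfl
  | succ k ih =>
    rw [Function.iterate_succ_apply']
    simp [aMap, hn, ih]

lemma aMap_iter_zero {d : ℕ} (j : ℕ) (ξ : Bd d) :
    (aMap d)^[j] ξ 0 = ξ 0 + (j : ZMod d) := by
  induction j with
  | zero => simp
  | succ k ih =>
    rw [Function.iterate_succ_apply']
    simp [aMap, ih]
    ring

lemma coe_aPerm_pow {d : ℕ} (j : ℕ) : ⇑((aPerm d) ^ j) = (aMap d)^[j] := by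
  induction j with
  | zero => rfl
  | succ k ih =>
    funext ξ
    rw [pow_succ', Function.iterate_succ_apply']
    rw [Equiv.Perm.mul_apply, ih]
    rfl

lemma aPerm_mem {d m : ℕ} (hd : 2 ≤ d) (ω : ℕ → ((Fin m → ZMod d) →+ ZMod d)) :
    aPerm d ∈ spinalGroup d m ω := by
  apply Subgroup.subset_closure
  exact Or.inl ⟨1, le_refl 1, by omega, (Function.iterate_one (aMap d)).symm⟩

lemma bPerm_mem {d m : ℕ} (hd : 2 ≤ d) (ω : ℕ → ((Fin m → ZMod d) →+ ZMod d))
    {b : Fin m → ZMod d} (hb : b ≠ 0) :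
    bPerm hd ω b ∈ spinalGroup d m ω := by
  apply Subgroup.subset_closure
  exact Or.inr ⟨b, hb, rfl⟩

lemma cofinal_trans {d : ℕ} {ξ η ζ : Bd d} (h1 : Cofinal ξ η) (h2 : Cofinal η ζ) :
    Cofinal ξ ζ := by
  obtain ⟨N1, h1⟩ := h1
  obtain ⟨N2, h2⟩ := h2
  exact ⟨max N1 N2, fun n hn => (h1 n (le_trans (le_max_left _ _) hn)).trans
    (h2 n (le_trans (le_max_right _ _) hn))⟩

lemma cofinal_symm {d : ℕ} {ξ η : Bd d} (h : Cofinal ξ η) : Cofinal η ξ := by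
  obtain ⟨N, h⟩ := h
  exact ⟨N, fun n hn => (h n hn).symm⟩

lemma cofinal_of_mem {d m : ℕ} (hd : 2 ≤ d) (ω : ℕ → ((Fin m → ZMod d) →+ ZMod d))
    {g : Equiv.Perm (Bd d)} (hg : g ∈ spinalGroup d m ω) (ξ : Bd d) :
    Cofinal ξ (g ξ) := by
  induction hg using Subgroup.closure_induction generalizing ξ with
  | mem π hπ =>
    rcases hπ with ⟨j, _, _, hf⟩ | ⟨b, _, hf⟩
    · refine ⟨1, fun n hn => ?_⟩
      rw [show π ξ = ⇑π ξ from rfl, hf, aMap_iter_ne j ξ (by omega)]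
    · by_cases hP : ∃ n, Pc d ξ n
      · obtain ⟨n₀, hn₀⟩ := hP
        refine ⟨n₀ + 1, fun n hn => ?_⟩
        rw [show π ξ = ⇑π ξ from rfl, hf]
        exact (bMap_neg (fun hc => by have := Pc_uniq hd hc hn₀; omega)).symm
      · refine ⟨0, fun n _ => ?_⟩
        rw [show π ξ = ⇑π ξ from rfl, hf]
        exact (bMap_neg (fun hc => hP ⟨n, hc⟩)).symm
  | one => exact ⟨0, fun n _ => rfl⟩
  | mul x y hx hy ihx ihy =>
    have h1 : Cofinal ξ (y ξ) := ihy ξ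
    have h2 : Cofinal (y ξ) (x (y ξ)) := ihx (y ξ)
    exact cofinal_trans h1 h2
  | inv x hx ih =>
    have := ih (x⁻¹ ξ)
    rw [show x (x⁻¹ ξ) = ξ from x.apply_symm_apply ξ] at this
    exact cofinal_symm this

lemma key_lemma {d m : ℕ} (hd : 2 ≤ d) (ω : ℕ → ((Fin m → ZMod d) →+ ZMod d))
    (hsurj : ∀ n, Function.Surjective (ω n)) :
    ∀ N (ξ η : Bd d), (∀ n, N ≤ n → ξ n = η n) →
      ∃ g ∈ spinalGroup d m ω, g ξ = η := by
  intro N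
  induction N with
  | zero =>
    intro ξ η h
    exact ⟨1, one_mem _, funext fun n => h n (Nat.zero_le n)⟩
  | succ N ih =>
    intro ξ η h
    by_cases hNe : ξ N = η N
    · refine ih ξ η (fun n hn => ?_)
      rcases Nat.eq_or_lt_of_le hn with h' | h'
      · rw [← h']; exact hNe
      · exact h n h'
    · rcases Nat.eq_zero_or_pos N with hN0 | hNpos
      · -- use a-power
        subst hN0
        refine ⟨(aPerm d) ^ (η 0 - ξ 0 : ZMod d).val,
          Subgroup.pow_mem _ (aPerm_mem hd ω) _, funext fun n => ?_⟩
        rw [show ((aPerm d) ^ (η 0 - ξ 0 : ZMod d).val) ξ n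
            = (aMap d)^[(η 0 - ξ 0 : ZMod d).val] ξ n from congrFun (congrFun (coe_aPerm_pow _) ξ) n]
        rcases Nat.eq_zero_or_pos n with hn0 | hn
        · subst hn0
          rw [aMap_iter_zero]
          haveI : NeZero d := ⟨by omega⟩
          rw [ZMod.natCast_val, ZMod.cast_id]
          ring
        · rw [aMap_iter_ne _ _ (by omega)]
          exact h n (by omega)
      · -- use a spinal generator at position N
        obtain ⟨b, hb⟩ := hsurj (N - 1) (η N - ξ N)
        have hb0 : b ≠ 0 := by
          intro h0
          rw [h0, map_zero] at hb
          exact hNe (by linear_combination hb)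
        set ξ' : Bd d := fun n =>
            if n < N - 1 then (d : ZMod d) - 1 else if n = N - 1 then 0 else ξ n
          with hξ'
        have hξ'tail : ∀ n, N ≤ n → ξ' n = ξ n := by
          intro n hn
          simp only [hξ']
          rw [if_neg (by omega), if_neg (by omega)]
        have hPc : Pc d ξ' N := by
          refine ⟨by omega, fun i hi => ?_, ?_⟩
          · simp only [hξ']; rw [if_pos (by omega)]
          · simp only [hξ']; simp
        obtain ⟨g₁, hg₁mem, hg₁⟩ := ih ξ ξ' (fun n hn => by
          rcases Nat.eq_or_lt_of_le hn with h' | h'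
          · rw [← h', hξ'tail N (le_refl N)]
          · rw [hξ'tail n (by omega)])
        set ξ'' := bMap d m ω b ξ' with hξ''
        have hξ''N : ξ'' N = η N := by
          rw [hξ'', bMap_pos hPc, hξ'tail N (le_refl N), hb]
          ring
        have hξ''tail : ∀ n, N ≤ n → ξ'' n = η n := by
          intro n hn
          rcases Nat.eq_or_lt_of_le hn with h' | h'
          · rw [← h']; exact hξ''N
          · rw [hξ'', bMap_neg (fun hc => by have := Pc_uniq hd hc hPc; omega),
              hξ'tail n (by omega)]
            exact h n (by omega)
        obtain ⟨g₂, hg₂mem, hg₂⟩ := ih ξ'' η hξ''tail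
        refine ⟨g₂ * bPerm hd ω b * g₁, mul_mem (mul_mem hg₂mem (bPerm_mem hd ω hb0)) hg₁mem,
          ?_⟩
        rw [Equiv.Perm.mul_apply, Equiv.Perm.mul_apply, hg₁,
          show (bPerm hd ω b) ξ' = bMap d m ω b ξ' from rfl, ← hξ'', hg₂]

/-- for every boundary point `ξ`, the orbit of `ξ` under the spinal group
`G_ω` is exactly the cofinality class of `ξ`. -/
theorem orbit_eq_cofinality_class (d m : ℕ) (hd : 2 ≤ d) (hm : 1 ≤ m)
    (ω : ℕ → ((Fin m → ZMod d) →+ ZMod d))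
    (hsurj : ∀ n, Function.Surjective (ω n)) (ξ : Bd d) :
    MulAction.orbit (spinalGroup d m ω) ξ = Cof ξ := by
  ext η
  constructor
  · rintro ⟨⟨g, hg⟩, rfl⟩
    show Cofinal ξ (g ξ)
    exact cofinal_of_mem hd ω hg ξ
  · intro hη
    obtain ⟨N, hN⟩ := cofinal_symm hη
    obtain ⟨g, hgmem, hg⟩ := key_lemma hd ω hsurj N η ξ hN
    refine ⟨⟨g⁻¹, inv_mem hgmem⟩, ?_⟩
    show g⁻¹ ξ = η
    rw [← hg]; exact g.symm_apply_apply η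

end
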